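/- Let D be a digraph and let D' be obtained from D by subdividing every arc once: each arc (u,v) is replaced by a new vertex x and the arcs (u,x), (x,v). Then a vertex set S ⊆ V(D) is a feedback vertex set of D (i.e., D − S is acyclic) if and only if S is a directed odd cycle transversal of D'. In particular, D contains a directed cycle if and only if D' contains a directed odd cycle. -/

import Mathlib

/-- The digraph obtained from the digraph with arc relation `A` by adding, for
every arc `(u,v)`, a new vertex (encoded `Sum.inr (u,v)`) and arcs
`(u, x)`, `(x, v)`, while keeping the original arcs. -/
def SubdivKeep {V : Type*} (A : V → V → Prop) : (V ⊕ V × V) → (V ⊕ V × V) → Prop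
  | Sum.inl u, Sum.inl v => A u v
  | Sum.inl u, Sum.inr p => p.1 = u ∧ A p.1 p.2
  | Sum.inr p, Sum.inl v => p.2 = v ∧ A p.1 p.2
  | Sum.inr _, Sum.inr _ => False

section
variable {V : Type*} (A : V → V → Prop)

lemma subdiv_key (T : Set V) :
    (∃ (n : ℕ) (c : ZMod n → V), 0 < n ∧ Function.Injective c ∧
        ∀ i, A (c i) (c (i + 1)) ∧ c i ∉ T) ↔
      (∃ (n : ℕ) (c : ZMod n → V ⊕ V × V), Odd n ∧ Function.Injective c ∧
        ∀ i, SubdivKeep A (c i) (c (i + 1)) ∧ c i ∉ Sum.inl '' T) := by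
  constructor
  · rintro ⟨n, c, hn, hinj, hc⟩
    rcases Nat.even_or_odd n with he | ho
    · -- even length: subdivide one arc, length n+1
      haveI : NeZero n := ⟨hn.ne'⟩
      have hn2 : 2 ≤ n := by
        rcases he with ⟨m, hm⟩; omega
      refine ⟨n + 1,
        fun i => if i.val < n then Sum.inl (c (i.val : ZMod n))
          else Sum.inr (c ((n - 1 : ℕ) : ZMod n), c 0), he.add_one, ?_, ?_⟩
      · intro i j hij
        have hiv : i.val < n + 1 := ZMod.val_lt i
        have hjv : j.val < n + 1 := ZMod.val_lt j
        by_cases hi : i.val < n <;> by_cases hj : j.val < n <;>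
          simp only [hi, hj, if_pos, if_neg, if_true, if_false] at hij
        · have : (i.val : ZMod n) = (j.val : ZMod n) := hinj (Sum.inl.inj hij)
          have h1 : ((i.val : ZMod n)).val = i.val := ZMod.val_cast_of_lt hi
          have h2 : ((j.val : ZMod n)).val = j.val := ZMod.val_cast_of_lt hj
          have : i.val = j.val := by rw [← h1, ← h2, this]
          exact ZMod.val_injective _ this
        · exact absurd hij (by simp)
        · exact absurd hij (by simp)
        · have : i.val = j.val := by omega
          exact ZMod.val_injective _ this
      · intro i
        have hiv : i.val < n + 1 := ZMod.val_lt i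
        haveI : Fact (1 < n + 1) := ⟨by omega⟩
        have hone : (1 : ZMod (n+1)).val = 1 := ZMod.val_one _
        have hval : (i + 1).val = (i.val + 1) % (n + 1) := by
          rw [ZMod.val_add, hone]
        constructor
        · by_cases hi : i.val < n
          · by_cases hi' : i.val + 1 < n
            · have hv' : (i + 1).val = i.val + 1 := by
                rw [hval, Nat.mod_eq_of_lt (by omega)]
              simp only [if_pos hi, hv', if_pos hi']
              show A (c (i.val : ZMod n)) (c ((i.val + 1 : ℕ) : ZMod n))
              have : ((i.val + 1 : ℕ) : ZMod n) = (i.val : ZMod n) + 1 := by push_cast; ring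
              rw [this]
              exact (hc _).1
            · -- i.val = n - 1
              have hieq : i.val = n - 1 := by omega
              have hv' : (i + 1).val = n := by
                rw [hval, Nat.mod_eq_of_lt (by omega)]; omega
              simp only [if_pos hi, hv', if_neg (lt_irrefl n)]
              show ((c ((n - 1 : ℕ) : ZMod n), c 0).1 = c (i.val : ZMod n)) ∧ _
              refine ⟨by rw [hieq], ?_⟩
              show A (c ((n - 1 : ℕ) : ZMod n)) (c 0)
              have h0 : ((n - 1 : ℕ) : ZMod n) + 1 = 0 := by
                have : ((n - 1 : ℕ) : ZMod n) + 1 = ((n - 1 + 1 : ℕ) : ZMod n) := by push_cast; ring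
                rw [this, show n - 1 + 1 = n by omega, ZMod.natCast_self]
              have := (hc ((n - 1 : ℕ) : ZMod n)).1
              rwa [h0] at this
          · have hieq : i.val = n := by omega
            have hv' : (i + 1).val = 0 := by
              rw [hval, hieq, Nat.mod_self]
            simp only [if_neg hi, hv', if_pos hn]
            show ((c ((n - 1 : ℕ) : ZMod n), c 0).2 = c ((0 : ℕ) : ZMod n)) ∧
              A (c ((n - 1 : ℕ) : ZMod n), c 0).1 (c ((n - 1 : ℕ) : ZMod n), c 0).2
            refine ⟨by norm_num, ?_⟩
            show A (c ((n - 1 : ℕ) : ZMod n)) (c 0)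
            have h0 : ((n - 1 : ℕ) : ZMod n) + 1 = 0 := by
              have : ((n - 1 : ℕ) : ZMod n) + 1 = ((n - 1 + 1 : ℕ) : ZMod n) := by push_cast; ring
              rw [this, show n - 1 + 1 = n by omega, ZMod.natCast_self]
            have := (hc ((n - 1 : ℕ) : ZMod n)).1
            rwa [h0] at this
        · by_cases hi : i.val < n
          · simp only [if_pos hi]
            rintro ⟨a, ha, hin⟩
            exact (hc ((i.val : ℕ) : ZMod n)).2 (Sum.inl.inj hin ▸ ha)
          · simp only [if_neg hi]
            rintro ⟨a, _, h⟩
            cases h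
    · refine ⟨n, Sum.inl ∘ c, ho, Sum.inl_injective.comp hinj, fun i => ⟨(hc i).1, ?_⟩⟩
      rintro ⟨a, ha, h⟩
      exact (hc i).2 (Sum.inl.inj h ▸ ha)
  · rintro ⟨n, c, hodd, hinj, hc⟩
    have hn0 : 0 < n := hodd.pos
    haveI : NeZero n := ⟨hn0.ne'⟩
    -- find a starting vertex which is `inl`
    have hstart : ∃ i₀ : ZMod n, (c i₀).isLeft := by
      rcases h0 : c 0 with a | p
      · exact ⟨0, by rw [h0]; rfl⟩
      · rcases h1 : c (0 + 1) with a | q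
        · exact ⟨0 + 1, by rw [h1]; rfl⟩
        · have := (hc 0).1
          rw [h0, h1] at this
          exact this.elim
    obtain ⟨i₀, hi₀⟩ := hstart
    set step : ZMod n → ZMod n := fun x => if (c (x + 1)).isLeft then x + 1 else x + 2 with hstep
    set r : ℕ → ZMod n := fun m => step^[m] i₀ with hr
    have hrsucc : ∀ m, r (m + 1) = step (r m) := fun m => Function.iterate_succ_apply' step m i₀
    -- every visited vertex is `inl`
    have hL : ∀ m, (c (r m)).isLeft := by
      intro m
      induction m with
      | zero => exact hi₀
      | succ m ih =>
        rw [hrsucc]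
        by_cases h : (c (r m + 1)).isLeft
        · rw [hstep]; simp only [if_pos h]; exact h
        · rw [hstep]; simp only [if_neg h]
          rcases hp : c (r m + 1) with a | p
          · exact absurd (by rw [hp]; rfl) h
          · rcases hq : c (r m + 2) with b | q
            · rfl
            · have := (hc (r m + 1)).1
              rw [hp, show r m + 1 + 1 = r m + 2 by ring, hq] at this
              exact this.elim
    set u : ℕ → V := fun m => (c (r m)).elim id Prod.fst with hu
    have hval : ∀ m a, c (r m) = Sum.inl a → u m = a := by
      intro m a ha; rw [hu]; simp [ha]
    have hcl : ∀ m, c (r m) = Sum.inl (u m) := by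
      intro m
      have hLm := hL m
      rcases hx : c (r m) with a | p
      · rw [hval m a hx]
      · rw [hx] at hLm; simp at hLm
    -- arcs
    have hA : ∀ m, A (u m) (u (m + 1)) := by
      intro m
      have ha := hcl m
      have hb := hcl (m + 1)
      rw [hrsucc] at hb
      by_cases h : (c (r m + 1)).isLeft
      · rw [hstep] at hb; simp only [if_pos h] at hb
        have := (hc (r m)).1
        rw [ha, hb] at this
        exact this
      · rw [hstep] at hb; simp only [if_neg h] at hb
        rcases hp : c (r m + 1) with a | p
        · exact absurd (by rw [hp]; rfl) h
        · have h1 := (hc (r m)).1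
          rw [ha, hp] at h1
          have h2 := (hc (r m + 1)).1
          rw [hp, show r m + 1 + 1 = r m + 2 by ring, hb] at h2
          obtain ⟨hpa, hAp⟩ := h1
          obtain ⟨hpb, _⟩ := h2
          rw [← hpa, ← hpb]
          exact hAp
    -- avoidance
    have hnT : ∀ m, u m ∉ T := by
      intro m hmem
      exact (hc (r m)).2 ⟨u m, hmem, (hcl m).symm⟩
    -- step is injective on `inl` points
    have hstep_inj : ∀ x y, (c x).isLeft → (c y).isLeft → step x = step y → x = y := by
      intro x y hx hy hxy
      have e : ∀ z : ZMod n, step z = if (c (z + 1)).isLeft then z + 1 else z + 2 :=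
        fun z => rfl
      rw [e, e] at hxy
      by_cases h1 : (c (x + 1)).isLeft <;> by_cases h2 : (c (y + 1)).isLeft
      · rw [if_pos h1, if_pos h2] at hxy; exact add_right_cancel hxy
      · rw [if_pos h1, if_neg h2] at hxy
        have hx1 : x = y + 1 := by
          have h3 : x + 1 = (y + 1) + 1 := by rw [hxy]; ring
          exact add_right_cancel h3
        exact absurd (hx1 ▸ hx) h2
      · rw [if_neg h1, if_pos h2] at hxy
        have hy1 : y = x + 1 := by
          have h3 : y + 1 = (x + 1) + 1 := by rw [← hxy]; ring
          exact add_right_cancel h3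
        exact absurd (hy1 ▸ hy) h1
      · rw [if_neg h1, if_neg h2] at hxy; exact add_right_cancel hxy
    -- returning to the start
    have hback : ∀ t a, r a = r (a + t) → r 0 = r t := by
      intro t a
      induction a with
      | zero => intro h; simpa using h
      | succ a ih =>
        intro h
        rw [show a + 1 + t = (a + t) + 1 by ring] at h
        rw [hrsucc, hrsucc] at h
        exact ih (hstep_inj _ _ (hL a) (hL (a + t)) h)
    -- pigeonhole: some repetition
    have hrep : ∃ t, 0 < t ∧ r t = r 0 := by
      have hcard : Fintype.card (ZMod n) < Fintype.card (Fin (n + 1)) := by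
        rw [ZMod.card, Fintype.card_fin]; omega
      obtain ⟨x, y, hxy, hfeq⟩ := Fintype.exists_ne_map_eq_of_card_lt
        (fun m : Fin (n + 1) => r m.val) hcard
      rcases lt_or_gt_of_ne (fun h : x.val = y.val => hxy (Fin.ext h)) with h | h
      · refine ⟨y.val - x.val, by omega, ?_⟩
        exact (hback _ x.val (by rw [show x.val + (y.val - x.val) = y.val by omega]; exact hfeq)).symm
      · refine ⟨x.val - y.val, by omega, ?_⟩
        exact (hback _ y.val (by rw [show y.val + (x.val - y.val) = x.val by omega]; exact hfeq.symm)).symm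
    set k := Nat.find hrep with hkdef
    obtain ⟨hk0, hkr⟩ : 0 < k ∧ r k = r 0 := Nat.find_spec hrep
    have hkmin : ∀ m, 0 < m → r m = r 0 → k ≤ m := fun m h1 h2 => Nat.find_min' hrep ⟨h1, h2⟩
    haveI : NeZero k := ⟨hk0.ne'⟩
    refine ⟨k, fun i => u i.val, hk0, ?_, ?_⟩
    · intro i j hij
      have hij' : u i.val = u j.val := hij
      have hri : r i.val = r j.val :=
        hinj (by rw [hcl i.val, hcl j.val, hij'])
      rcases Nat.lt_trichotomy i.val j.val with h | h | h
      · have : r 0 = r (j.val - i.val) := hback _ i.val (by rw [show i.val + (j.val - i.val) = j.val by omega]; exact hri)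
        have := hkmin _ (by omega) this.symm
        have := ZMod.val_lt j
        omega
      · exact ZMod.val_injective _ h
      · have : r 0 = r (i.val - j.val) := hback _ j.val (by rw [show j.val + (i.val - j.val) = i.val by omega]; exact hri.symm)
        have := hkmin _ (by omega) this.symm
        have := ZMod.val_lt i
        omega
    · intro i
      have hone : (1 : ZMod k).val = 1 % k := by
        rw [show (1 : ZMod k) = ((1 : ℕ) : ZMod k) by norm_num, ZMod.val_natCast]
      have hvadd : (i + 1).val = (i.val + 1) % k := by
        rw [ZMod.val_add, hone]
        conv_lhs => rw [show i.val = i.val % k from (Nat.mod_eq_of_lt (ZMod.val_lt i)).symm]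
        rw [← Nat.add_mod]
      refine ⟨?_, hnT i.val⟩
      by_cases h : i.val + 1 < k
      · have hv : (i + 1).val = i.val + 1 := by rw [hvadd, Nat.mod_eq_of_lt h]
        show A (u i.val) (u (i + 1).val)
        rw [hv]
        exact hA i.val
      · have hik : i.val + 1 = k := by have := ZMod.val_lt i; omega
        have h0 : (i + 1).val = 0 := by rw [hvadd, hik, Nat.mod_self]
        show A (u i.val) (u (i + 1).val)
        rw [h0]
        have huk : u k = u 0 := by simp only [hu, hkr]
        have := hA i.val
        rwa [hik, huk] at this
end


/-- `S` is a directed feedback vertex set of `D` iff it is a directed odd cycle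
transversal of `D'` (the arc-subdivided graph keeping original arcs); in
particular `D` has a directed cycle iff `D'` has a directed odd cycle. -/
theorem stmt_14 {V : Type*} (A : V → V → Prop) (S : Set V) :
    ((¬ ∃ (n : ℕ) (c : ZMod n → V), 0 < n ∧ Function.Injective c ∧
        ∀ i, A (c i) (c (i + 1)) ∧ c i ∉ S) ↔
      (¬ ∃ (n : ℕ) (c : ZMod n → V ⊕ V × V), Odd n ∧ Function.Injective c ∧
        ∀ i, SubdivKeep A (c i) (c (i + 1)) ∧ c i ∉ Sum.inl '' S)) ∧
    ((∃ (n : ℕ) (c : ZMod n → V), 0 < n ∧ Function.Injective c ∧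
        ∀ i, A (c i) (c (i + 1))) ↔
      (∃ (n : ℕ) (c : ZMod n → V ⊕ V × V), Odd n ∧ Function.Injective c ∧
        ∀ i, SubdivKeep A (c i) (c (i + 1)))) := by
  refine ⟨not_congr (subdiv_key A S), ?_⟩
  have h := subdiv_key A (∅ : Set V)
  simpa using h
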